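/- Let H be a quasi-ideal of a Leibniz algebra L over a field F with core H_L = 0. Then one of the following occurs: (i) H = 0; (ii) H has codimension one in L (dim(L/H) = 1); (iii) L is a Lie algebra ([x,x] = 0 for all x ∈ L) which is either almost abelian or isomorphic to the three-dimensional algebra K₂ (which occurs only when F has characteristic 2); (iv) L = I ∔ Fh (vector-space direct sum) where I is the span of all squares [x,x], and [x,h] = x, [h,x] = 0 for all x ∈ I, and [h,h] = 0. -/
import Mathlib


/-! Basic definitions for (right) Leibniz algebras given by a bilinear bracket
on a vector space, following Towers, "Quasi-ideals of Leibniz algebras". -/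

section LeibnizDefs

variable {F L : Type*} [Field F] [AddCommGroup L] [Module F L]

/-- The (right) Leibniz identity for a bilinear bracket `b`:
`[x,[y,z]] = [[x,y],z] - [[x,z],y]`. -/
def IsLeibniz (b : L →ₗ[F] L →ₗ[F] L) : Prop :=
  ∀ x y z : L, b x (b y z) = b (b x y) z - b (b x z) y

/-- `[A,C]`: the span of all brackets `[a,c]` with `a ∈ A`, `c ∈ C`. -/
def bspan (b : L →ₗ[F] L →ₗ[F] L) (A C : Submodule F L) : Submodule F L :=
  Submodule.span F {z : L | ∃ a ∈ A, ∃ c ∈ C, z = b a c}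

/-- A subalgebra is a subspace `H` with `[H,H] ⊆ H`. -/
def IsSubalgebra (b : L →ₗ[F] L →ₗ[F] L) (H : Submodule F L) : Prop :=
  bspan b H H ≤ H

/-- An ideal is a subspace `A` with `[A,L] + [L,A] ⊆ A`. -/
def IsIdeal (b : L →ₗ[F] L →ₗ[F] L) (A : Submodule F L) : Prop :=
  bspan b A ⊤ ⊔ bspan b ⊤ A ≤ A

/-- A quasi-ideal of `L` is a subspace `H` with `[H,K] + [K,H] ⊆ H + K`
for every subspace `K` of `L`. -/
def IsQuasiIdeal (b : L →ₗ[F] L →ₗ[F] L) (H : Submodule F L) : Prop :=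
  ∀ K : Submodule F L, bspan b H K ⊔ bspan b K H ≤ H ⊔ K

/-- `H` is a quasi-ideal of the subalgebra `E`: `H ⊆ E` and
`[H,K] + [K,H] ⊆ H + K` for every subspace `K` of `E`. -/
def IsQuasiIdealIn (b : L →ₗ[F] L →ₗ[F] L) (H E : Submodule F L) : Prop :=
  H ≤ E ∧ ∀ K : Submodule F L, K ≤ E → bspan b H K ⊔ bspan b K H ≤ H ⊔ K

/-- `H` is an `m`-step subquasi-ideal of `L`: there is a chain of subalgebras
`H = H_m qu H_{m-1} qu ... qu H_0 = L`, each a quasi-ideal of the next.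
(Here `C i` is `H_i`.) -/
def IsSubquasiIdealSteps (b : L →ₗ[F] L →ₗ[F] L) (m : ℕ) (H : Submodule F L) : Prop :=
  ∃ C : ℕ → Submodule F L, C 0 = ⊤ ∧ C m = H ∧
    (∀ i ≤ m, IsSubalgebra b (C i)) ∧
    ∀ i < m, IsQuasiIdealIn b (C (i + 1)) (C i)

/-- `H` is a subquasi-ideal of `L` if it is an `m`-step subquasi-ideal for some `m`. -/
def IsSubquasiIdeal (b : L →ₗ[F] L →ₗ[F] L) (H : Submodule F L) : Prop :=
  ∃ m : ℕ, IsSubquasiIdealSteps b m H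

/-- Lower central series: `lowerCentral b K n` is `K^{n+1}` in the paper's notation,
i.e. `K^1 = K`, `K^{k+1} = [K^k, K]`. -/
def lowerCentral (b : L →ₗ[F] L →ₗ[F] L) (K : Submodule F L) : ℕ → Submodule F L
  | 0 => K
  | n + 1 => bspan b (lowerCentral b K n) K

/-- Derived series: `derSeries b H n` is `H^{(n+1)}` in the paper's notation,
i.e. `H^{(1)} = H`, `H^{(k+1)} = [H^{(k)}, H^{(k)}]`. -/
def derSeries (b : L →ₗ[F] L →ₗ[F] L) (H : Submodule F L) : ℕ → Submodule F L
  | 0 => H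
  | n + 1 => bspan b (derSeries b H n) (derSeries b H n)

/-- The core `H_L` of `H`: the sum of all ideals of `L` contained in `H`. -/
def coreOf (b : L →ₗ[F] L →ₗ[F] L) (H : Submodule F L) : Submodule F L :=
  sSup {A : Submodule F L | IsIdeal b A ∧ A ≤ H}

/-- A derivation of the bracket `b`. -/
def IsDerivation (b : L →ₗ[F] L →ₗ[F] L) (d : L →ₗ[F] L) : Prop :=
  ∀ x y : L, d (b x y) = b (d x) y + b x (d y)

/-- `I`: the span of all squares `[x,x]`, `x ∈ L`. -/
def sqSpan (b : L →ₗ[F] L →ₗ[F] L) : Submodule F L :=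
  Submodule.span F {z : L | ∃ x : L, z = b x x}

/-- The centre `Z(L) = {z | [z,x] = [x,z] = 0 for all x}`. -/
def lcenter (b : L →ₗ[F] L →ₗ[F] L) : Submodule F L where
  carrier := {z : L | ∀ x : L, b z x = 0 ∧ b x z = 0}
  zero_mem' := by intro x; simp
  add_mem' := by
    intro y z hy hz x
    obtain ⟨h1, h2⟩ := hy x
    obtain ⟨h3, h4⟩ := hz x
    constructor <;> simp [h1, h2, h3, h4]
  smul_mem' := by
    intro c z hz x
    obtain ⟨h1, h2⟩ := hz x
    constructor <;> simp [h1, h2]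

/-- The centre of a subalgebra `E`, as a subspace of `L`:
`Z(E) = {z ∈ E | [z,x] = [x,z] = 0 for all x ∈ E}`. -/
def centerIn (b : L →ₗ[F] L →ₗ[F] L) (E : Submodule F L) : Submodule F L where
  carrier := {z : L | z ∈ E ∧ ∀ x ∈ E, b z x = 0 ∧ b x z = 0}
  zero_mem' := ⟨E.zero_mem, by intro x _; simp⟩
  add_mem' := by
    intro y z hy hz
    refine ⟨E.add_mem hy.1 hz.1, fun x hx => ?_⟩
    obtain ⟨h1, h2⟩ := hy.2 x hx
    obtain ⟨h3, h4⟩ := hz.2 x hx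
    constructor <;> simp [h1, h2, h3, h4]
  smul_mem' := by
    intro c z hz
    refine ⟨E.smul_mem c hz.1, fun x hx => ?_⟩
    obtain ⟨h1, h2⟩ := hz.2 x hx
    constructor <;> simp [h1, h2]

/-- The subalgebra generated by a set `S`. -/
def subalgGen (b : L →ₗ[F] L →ₗ[F] L) (S : Set L) : Submodule F L :=
  sInf {K : Submodule F L | IsSubalgebra b K ∧ S ⊆ K}

/-- `x` is a left Engel element: for each `y` there is `n` with `R_x^n(y) = 0`,
where `R_x(y) = [y,x]`. -/
def IsLeftEngel (b : L →ₗ[F] L →ₗ[F] L) (x : L) : Prop :=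
  ∀ y : L, ∃ n : ℕ, ((b.flip x) ^ n) y = 0

end LeibnizDefs

variable {F L : Type*} [Field F] [AddCommGroup L] [Module F L]

section Aux

variable {F L : Type*} [Field F] [AddCommGroup L] [Module F L]
variable (b : L →ₗ[F] L →ₗ[F] L)

lemma mem_bspan {A C : Submodule F L} {a c : L} (ha : a ∈ A) (hc : c ∈ C) :
    b a c ∈ bspan b A C :=
  Submodule.subset_span ⟨a, ha, c, hc, rfl⟩

lemma bspan_le {A C X : Submodule F L} (h : ∀ a ∈ A, ∀ c ∈ C, b a c ∈ X) :
    bspan b A C ≤ X := by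
  rw [bspan, Submodule.span_le]
  rintro z ⟨a, ha, c, hc, rfl⟩
  exact h a ha c hc

variable {b}

lemma quasiR {H : Submodule F L} (hH : IsQuasiIdeal b H) {h : L} (hh : h ∈ H) (x : L) :
    ∃ c : F, b h x - c • x ∈ H := by
  have hm0 : b h x ∈ bspan b H (Submodule.span F {x}) :=
    mem_bspan b hh (Submodule.mem_span_singleton_self x)
  have hm : b h x ∈ H ⊔ Submodule.span F {x} :=
    hH (Submodule.span F {x}) (le_sup_left (a := bspan b H (Submodule.span F {x})) hm0)
  obtain ⟨u, hu, v, hv, huv⟩ := Submodule.mem_sup.1 hm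
  obtain ⟨c, rfl⟩ := Submodule.mem_span_singleton.1 hv
  exact ⟨c, by rw [← huv]; simpa using hu⟩

lemma quasiL {H : Submodule F L} (hH : IsQuasiIdeal b H) {h : L} (hh : h ∈ H) (x : L) :
    ∃ c : F, b x h - c • x ∈ H := by
  have hm0 : b x h ∈ bspan b (Submodule.span F {x}) H :=
    mem_bspan b (Submodule.mem_span_singleton_self x) hh
  have hm : b x h ∈ H ⊔ Submodule.span F {x} :=
    hH (Submodule.span F {x}) (le_sup_right (b := bspan b (Submodule.span F {x}) H) hm0)
  obtain ⟨u, hu, v, hv, huv⟩ := Submodule.mem_sup.1 hm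
  obtain ⟨c, rfl⟩ := Submodule.mem_span_singleton.1 hv
  exact ⟨c, by rw [← huv]; simpa using hu⟩

lemma quasi_subalg {H : Submodule F L} (hH : IsQuasiIdeal b H) {h k : L}
    (hh : h ∈ H) (hk : k ∈ H) : b h k ∈ H := by
  have h1 : b h k ∈ bspan b H H := mem_bspan b hh hk
  have h2 : b h k ∈ H ⊔ H := hH H (le_sup_left (a := bspan b H H) h1)
  simpa using h2

lemma sq_mem (x : L) : b x x ∈ sqSpan b := Submodule.subset_span ⟨x, rfl⟩

lemma polar_mem (x y : L) : b x y + b y x ∈ sqSpan b := by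
  have : b x y + b y x = b (x+y) (x+y) - b x x - b y y := by
    simp [map_add, LinearMap.add_apply]; abel
  rw [this]
  exact Submodule.sub_mem _ (Submodule.sub_mem _ (sq_mem _) (sq_mem _)) (sq_mem _)

lemma left_sq_zero (hb : IsLeibniz b) {z : L} (hz : z ∈ sqSpan b) (x : L) :
    b x z = 0 := by
  have : sqSpan b ≤ LinearMap.ker (b x) := by
    rw [sqSpan, Submodule.span_le]
    rintro w ⟨y, rfl⟩
    simp only [SetLike.mem_coe, LinearMap.mem_ker]
    have := hb x y y
    simpa using this
  simpa using this hz

lemma sq_right (hb : IsLeibniz b) {z : L} (hz : z ∈ sqSpan b) (y : L) :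
    b z y ∈ sqSpan b := by
  induction hz using Submodule.span_induction with
  | mem w hw =>
      obtain ⟨x, rfl⟩ := hw
      have h1 := hb x x y
      have : b (b x x) y = b x (b x y) + b (b x y) x := by
        rw [h1]; abel
      rw [this]
      exact polar_mem _ _
  | zero => simpa using Submodule.zero_mem (sqSpan b)
  | add u v _ _ hu hv => rw [map_add, LinearMap.add_apply]; exact Submodule.add_mem _ hu hv
  | smul c u _ hu => rw [map_smul, LinearMap.smul_apply]; exact Submodule.smul_mem _ c hu

lemma sqSpan_ideal (hb : IsLeibniz b) : IsIdeal b (sqSpan b) := by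
  apply sup_le
  · exact bspan_le b (fun a ha c _ => sq_right hb ha c)
  · exact bspan_le b (fun a _ c hc => by rw [left_sq_zero hb hc a]; exact Submodule.zero_mem _)

lemma ideal_eq_bot_of_corefree {H A : Submodule F L} (hcore : coreOf b H = ⊥)
    (hA : IsIdeal b A) (hAH : A ≤ H) : A = ⊥ :=
  le_bot_iff.1 (hcore ▸ le_sSup (s := {A : Submodule F L | IsIdeal b A ∧ A ≤ H}) ⟨hA, hAH⟩)

lemma scalar_zero {H : Submodule F L} {x : L} (hx : x ∉ H) {c : F} (h : c • x ∈ H) :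
    c = 0 := by
  by_contra hc
  exact hx (by simpa [smul_smul, inv_mul_cancel₀ hc] using Submodule.smul_mem H c⁻¹ h)

lemma indep2 {H : Submodule F L} {x y : L} (hx : x ∉ H)
    (hy : y ∉ H ⊔ Submodule.span F {x}) {a c : F} (h : a • x + c • y ∈ H) :
    a = 0 ∧ c = 0 := by
  have hc : c = 0 := by
    by_contra hc
    apply hy
    have h1 : c • y ∈ H ⊔ Submodule.span F {x} := by
      have : c • y = (a • x + c • y) - a • x := by abel
      rw [this]
      exact Submodule.sub_mem _ (Submodule.mem_sup_left h)
        (Submodule.mem_sup_right (Submodule.smul_mem _ a (Submodule.mem_span_singleton_self x)))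
    simpa [smul_smul, inv_mul_cancel₀ hc] using
      Submodule.smul_mem (H ⊔ Submodule.span F {x}) c⁻¹ h1
  subst hc
  refine ⟨scalar_zero hx (by simpa using h), rfl⟩

lemma sup_mono_of_mem {H : Submodule F L} {x y : L} (hy1 : y ∈ H ⊔ Submodule.span F {x})
    (hy2 : y ∉ H) : H ⊔ Submodule.span F {x} ≤ H ⊔ Submodule.span F {y} := by
  obtain ⟨u, hu, v, hv, huv⟩ := Submodule.mem_sup.1 hy1
  obtain ⟨c, rfl⟩ := Submodule.mem_span_singleton.1 hv
  have hc : c ≠ 0 := by rintro rfl; simp at huv; exact hy2 (huv ▸ hu)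
  have hxmem : x ∈ H ⊔ Submodule.span F {y} := by
    have : x = c⁻¹ • y - c⁻¹ • u := by
      rw [← huv]; rw [smul_add, smul_smul, inv_mul_cancel₀ hc, one_smul]; abel
    rw [this]
    exact Submodule.sub_mem _
      (Submodule.mem_sup_right (Submodule.smul_mem _ _ (Submodule.mem_span_singleton_self y)))
      (Submodule.mem_sup_left (Submodule.smul_mem _ _ hu))
  apply sup_le le_sup_left
  rw [Submodule.span_le, Set.singleton_subset_iff]
  exact hxmem

end Aux

set_option maxHeartbeats 2000000 in
/-- Classification of core-free quasi-ideals of a Leibniz algebra. -/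
theorem corefree_quasiIdeal_classification (b : L →ₗ[F] L →ₗ[F] L) (hb : IsLeibniz b)
    (H : Submodule F L) (hH : IsQuasiIdeal b H) (hcore : coreOf b H = ⊥) :
    -- (i) H = 0
    H = ⊥ ∨
    -- (ii) H has codimension one in L
    Module.rank F (L ⧸ H) = 1 ∨
    -- (iii) L is a Lie algebra which is almost abelian or isomorphic to K₂
    ((∀ x : L, b x x = 0) ∧
      ((∃ a : L, bspan b ⊤ ⊤ ⊓ Submodule.span F {a} = ⊥ ∧
          bspan b ⊤ ⊤ ⊔ Submodule.span F {a} = ⊤ ∧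
          bspan b (bspan b ⊤ ⊤) (bspan b ⊤ ⊤) = ⊥ ∧
          ∀ x ∈ bspan b ⊤ ⊤, b x a = x) ∨
        (ringChar F = 2 ∧ ∃ x y z : L, LinearIndependent F ![x, y, z] ∧
          Submodule.span F {x, y, z} = ⊤ ∧
          b x y = z ∧ b y z = y ∧ b z x = x))) ∨
    -- (iv) L = I ∔ Fh with [x,h] = x, [h,x] = 0 for all x ∈ I and [h,h] = 0
    (∃ h : L, sqSpan b ⊓ Submodule.span F {h} = ⊥ ∧
      sqSpan b ⊔ Submodule.span F {h} = ⊤ ∧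
      (∀ x ∈ sqSpan b, b x h = x ∧ b h x = 0) ∧ b h h = 0) := by
  classical
  by_cases hbot : H = ⊥
  · exact Or.inl hbot
  -- H is not the whole space
  have htop : H ≠ ⊤ := by
    rintro rfl
    apply hbot
    apply ideal_eq_bot_of_corefree hcore _ le_rfl
    exact sup_le le_top le_top
  obtain ⟨x₀, hx₀⟩ : ∃ x, x ∉ H := by
    by_contra hc
    push_neg at hc
    exact htop (Submodule.eq_top_iff'.2 hc)
  by_cases hcod : ∀ y, y ∈ H ⊔ Submodule.span F {x₀}
  · -- codimension one: rank (L/H) = 1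
    right; left
    have hx0Q : (Submodule.Quotient.mk x₀ : L ⧸ H) ≠ 0 := by
      simpa [Submodule.Quotient.mk_eq_zero] using hx₀
    apply rank_eq_one (Submodule.Quotient.mk x₀) hx0Q
    intro w
    obtain ⟨y, rfl⟩ := Submodule.Quotient.mk_surjective H w
    obtain ⟨u, hu, v, hv, huv⟩ := Submodule.mem_sup.1 (hcod y)
    obtain ⟨c, rfl⟩ := Submodule.mem_span_singleton.1 hv
    refine ⟨c, ?_⟩
    rw [← Submodule.Quotient.mk_smul, Submodule.Quotient.eq]
    have : c • x₀ - y = -u := by rw [← huv]; abel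
    rw [this]
    exact Submodule.neg_mem _ hu
  -- codimension at least two
  obtain ⟨y₀, hy₀⟩ : ∃ y, y ∉ H ⊔ Submodule.span F {x₀} := by
    by_contra hc; push_neg at hc; exact hcod hc
  have P : ∀ x, x ∉ H → ∃ y, y ∉ H ⊔ Submodule.span F {x} := by
    intro x hx
    by_contra hc
    push_neg at hc
    have hmem : x₀ ∈ H ⊔ Submodule.span F {x} := hc x₀
    exact hy₀ (sup_mono_of_mem hmem hx₀ (hc y₀))
  -- scalar uniqueness helper
  have sub_scalar : ∀ (z x : L) (c c' : F), x ∉ H → z - c • x ∈ H → z - c' • x ∈ H →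
      c = c' := by
    intro z x c c' hx h1 h2
    have e : (z - c' • x) - (z - c • x) = (c - c') • x := by module
    have hm : (c - c') • x ∈ H := e ▸ Submodule.sub_mem H h2 h1
    have := scalar_zero hx hm
    have := sub_eq_zero.1 this
    exact this
  -- choice of right and left coefficients
  have hcRex : ∀ h x : L, ∃ c : F, h ∈ H → b h x - c • x ∈ H := by
    intro h x
    by_cases hh : h ∈ H
    · obtain ⟨c, hc⟩ := quasiR hH hh x; exact ⟨c, fun _ => hc⟩
    · exact ⟨0, fun h' => absurd h' hh⟩
  have hcLex : ∀ h x : L, ∃ c : F, h ∈ H → b x h - c • x ∈ H := by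
    intro h x
    by_cases hh : h ∈ H
    · obtain ⟨c, hc⟩ := quasiL hH hh x; exact ⟨c, fun _ => hc⟩
    · exact ⟨0, fun h' => absurd h' hh⟩
  choose cR hcR using hcRex
  choose cL hcL using hcLex
  set lam : L → F := fun h => cR h x₀ with hlam_def
  set mu : L → F := fun h => cL h x₀ with hmu_def
  -- coefficient is independent of the chosen outside vector (one step)
  have stepR : ∀ h ∈ H, ∀ x ∉ H, ∀ y, y ∉ H ⊔ Submodule.span F {x} → cR h y = cR h x := by
    intro h hh x hx y hy
    have hxy : x + y ∉ H := by
      intro h'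
      apply hy
      have e : y = (x + y) - x := by abel
      rw [e]
      exact Submodule.sub_mem _ (Submodule.mem_sup_left h')
        (Submodule.mem_sup_right (Submodule.mem_span_singleton_self x))
    have h1 := hcR h x hh
    have h2 := hcR h y hh
    have h3 := hcR h (x + y) hh
    have hadd : b h (x + y) = b h x + b h y := map_add _ _ _
    rw [hadd] at h3
    have comb : (cR h (x+y) - cR h x) • x + (cR h (x+y) - cR h y) • y ∈ H := by
      have e : (cR h (x+y) - cR h x) • x + (cR h (x+y) - cR h y) • y
          = (b h x - cR h x • x) + (b h y - cR h y • y)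
            - (b h x + b h y - cR h (x+y) • (x + y)) := by module
      rw [e]
      exact Submodule.sub_mem _ (Submodule.add_mem _ h1 h2) h3
    obtain ⟨e1, e2⟩ := indep2 hx hy comb
    have e1' := sub_eq_zero.1 e1
    have e2' := sub_eq_zero.1 e2
    rw [← e1', ← e2']
  have stepL : ∀ h ∈ H, ∀ x ∉ H, ∀ y, y ∉ H ⊔ Submodule.span F {x} → cL h y = cL h x := by
    intro h hh x hx y hy
    have hxy : x + y ∉ H := by
      intro h'
      apply hy
      have e : y = (x + y) - x := by abel
      rw [e]
      exact Submodule.sub_mem _ (Submodule.mem_sup_left h')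
        (Submodule.mem_sup_right (Submodule.mem_span_singleton_self x))
    have h1 := hcL h x hh
    have h2 := hcL h y hh
    have h3 := hcL h (x + y) hh
    have hadd : b (x + y) h = b x h + b y h := by
      rw [map_add]; rfl
    rw [hadd] at h3
    have comb : (cL h (x+y) - cL h x) • x + (cL h (x+y) - cL h y) • y ∈ H := by
      have e : (cL h (x+y) - cL h x) • x + (cL h (x+y) - cL h y) • y
          = (b x h - cL h x • x) + (b y h - cL h y • y)
            - (b x h + b y h - cL h (x+y) • (x + y)) := by module
      rw [e]
      exact Submodule.sub_mem _ (Submodule.add_mem _ h1 h2) h3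
    obtain ⟨e1, e2⟩ := indep2 hx hy comb
    have e1' := sub_eq_zero.1 e1
    have e2' := sub_eq_zero.1 e2
    rw [← e1', ← e2']
  have notmem_of_notmem_sup : ∀ y x : L, y ∉ H ⊔ Submodule.span F {x} → y ∉ H := by
    intro y x hy h'
    exact hy (Submodule.mem_sup_left h')
  -- transport to the fixed x₀
  have transR : ∀ h ∈ H, ∀ x, x ∉ H → cR h x = lam h := by
    intro h hh x hx
    obtain ⟨y, hy⟩ := P x hx
    have hyH : y ∉ H := notmem_of_notmem_sup y x hy
    have h1 : cR h y = cR h x := stepR h hh x hx y hy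
    by_cases hyx0 : y ∈ H ⊔ Submodule.span F {x₀}
    · obtain ⟨z, hz⟩ := P y hyH
      have hz0 : z ∉ H ⊔ Submodule.span F {x₀} := fun hzz =>
        hz (sup_mono_of_mem hyx0 hyH hzz)
      have h2 : cR h z = cR h y := stepR h hh y hyH z hz
      have h3 : cR h z = cR h x₀ := stepR h hh x₀ hx₀ z hz0
      rw [← h1, ← h2, h3]
    · have h2 : cR h y = cR h x₀ := stepR h hh x₀ hx₀ y hyx0
      rw [← h1, h2]
  have transL : ∀ h ∈ H, ∀ x, x ∉ H → cL h x = mu h := by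
    intro h hh x hx
    obtain ⟨y, hy⟩ := P x hx
    have hyH : y ∉ H := notmem_of_notmem_sup y x hy
    have h1 : cL h y = cL h x := stepL h hh x hx y hy
    by_cases hyx0 : y ∈ H ⊔ Submodule.span F {x₀}
    · obtain ⟨z, hz⟩ := P y hyH
      have hz0 : z ∉ H ⊔ Submodule.span F {x₀} := fun hzz =>
        hz (sup_mono_of_mem hyx0 hyH hzz)
      have h2 : cL h z = cL h y := stepL h hh y hyH z hz
      have h3 : cL h z = cL h x₀ := stepL h hh x₀ hx₀ z hz0
      rw [← h1, ← h2, h3]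
    · have h2 : cL h y = cL h x₀ := stepL h hh x₀ hx₀ y hyx0
      rw [← h1, h2]
  -- the master congruences
  have MR : ∀ h ∈ H, ∀ x : L, b h x - lam h • x ∈ H := by
    intro h hh x
    by_cases hx : x ∈ H
    · exact Submodule.sub_mem _ (quasi_subalg hH hh hx) (Submodule.smul_mem _ _ hx)
    · rw [← transR h hh x hx]; exact hcR h x hh
  have ML : ∀ h ∈ H, ∀ x : L, b x h - mu h • x ∈ H := by
    intro h hh x
    by_cases hx : x ∈ H
    · exact Submodule.sub_mem _ (quasi_subalg hH hx hh) (Submodule.smul_mem _ _ hx)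
    · rw [← transL h hh x hx]; exact hcL h x hh
  -- uniqueness of coefficients
  have UR : ∀ h ∈ H, ∀ x, x ∉ H → ∀ c : F, b h x - c • x ∈ H → c = lam h := by
    intro h hh x hx c hc
    exact sub_scalar (b h x) x c (lam h) hx hc (MR h hh x)
  have UL : ∀ h ∈ H, ∀ x, x ∉ H → ∀ c : F, b x h - c • x ∈ H → c = mu h := by
    intro h hh x hx c hc
    exact sub_scalar (b x h) x c (mu h) hx hc (ML h hh x)
  -- linearity of lam and mu on H
  have lam_add : ∀ h ∈ H, ∀ k ∈ H, lam (h + k) = lam h + lam k := by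
    intro h hh k hk
    refine (UR (h+k) (Submodule.add_mem _ hh hk) x₀ hx₀ (lam h + lam k) ?_).symm
    have hadd : b (h + k) x₀ = b h x₀ + b k x₀ := by rw [map_add]; rfl
    have e : b h x₀ + b k x₀ - (lam h + lam k) • x₀
        = (b h x₀ - lam h • x₀) + (b k x₀ - lam k • x₀) := by module
    rw [hadd, e]
    exact Submodule.add_mem _ (MR h hh x₀) (MR k hk x₀)
  have mu_add : ∀ h ∈ H, ∀ k ∈ H, mu (h + k) = mu h + mu k := by
    intro h hh k hk
    refine (UL (h+k) (Submodule.add_mem _ hh hk) x₀ hx₀ (mu h + mu k) ?_).symm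
    have hadd : b x₀ (h + k) = b x₀ h + b x₀ k := map_add _ _ _
    have e : b x₀ h + b x₀ k - (mu h + mu k) • x₀
        = (b x₀ h - mu h • x₀) + (b x₀ k - mu k • x₀) := by module
    rw [hadd, e]
    exact Submodule.add_mem _ (ML h hh x₀) (ML k hk x₀)
  have lam_smul : ∀ (c : F), ∀ h ∈ H, lam (c • h) = c * lam h := by
    intro c h hh
    refine (UR (c • h) (Submodule.smul_mem _ _ hh) x₀ hx₀ (c * lam h) ?_).symm
    have hsm : b (c • h) x₀ = c • b h x₀ := by rw [map_smul]; rfl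
    have e : c • b h x₀ - (c * lam h) • x₀ = c • (b h x₀ - lam h • x₀) := by module
    rw [hsm, e]
    exact Submodule.smul_mem _ _ (MR h hh x₀)
  have mu_smul : ∀ (c : F), ∀ h ∈ H, mu (c • h) = c * mu h := by
    intro c h hh
    refine (UL (c • h) (Submodule.smul_mem _ _ hh) x₀ hx₀ (c * mu h) ?_).symm
    have hsm : b x₀ (c • h) = c • b x₀ h := map_smul _ _ _
    have e : c • b x₀ h - (c * mu h) • x₀ = c • (b x₀ h - mu h • x₀) := by module
    rw [hsm, e]
    exact Submodule.smul_mem _ _ (ML h hh x₀)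
  have lam_sub : ∀ h ∈ H, ∀ k ∈ H, lam (h - k) = lam h - lam k := by
    intro h hh k hk
    have e : h - k = h + (-1 : F) • k := by module
    rw [e, lam_add h hh _ (Submodule.smul_mem _ _ hk), lam_smul _ k hk]; ring
  have mu_sub : ∀ h ∈ H, ∀ k ∈ H, mu (h - k) = mu h - mu k := by
    intro h hh k hk
    have e : h - k = h + (-1 : F) • k := by module
    rw [e, mu_add h hh _ (Submodule.smul_mem _ _ hk), mu_smul _ k hk]; ring
  -- [H,H] stays in H and key bracket memberships
  have Tmem : ∀ h ∈ H, ∀ k ∈ H, b (b h k) x₀ ∈ H := by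
    intro h hh k hk
    have hp : b x₀ k - mu k • x₀ ∈ H := ML k hk x₀
    have hq : b h x₀ - lam h • x₀ ∈ H := MR h hh x₀
    have key : b (b h k) x₀ = b (b h x₀ - lam h • x₀) k - b h (b x₀ k - mu k • x₀)
        + lam h • (b x₀ k - mu k • x₀) - mu k • (b h x₀ - lam h • x₀) := by
      simp only [map_sub, map_smul, LinearMap.sub_apply, LinearMap.smul_apply]
      rw [hb h x₀ k]
      module
    rw [key]
    exact Submodule.sub_mem _ (Submodule.add_mem _
      (Submodule.sub_mem _ (quasi_subalg hH hq hk) (quasi_subalg hH hh hp))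
      (Submodule.smul_mem _ _ hp)) (Submodule.smul_mem _ _ hq)
  have Smem : ∀ h ∈ H, ∀ k ∈ H, b x₀ (b h k) ∈ H := by
    intro h hh k hk
    have hp : b x₀ k - mu k • x₀ ∈ H := ML k hk x₀
    have hq : b x₀ h - mu h • x₀ ∈ H := ML h hh x₀
    have key : b x₀ (b h k) = b (b x₀ h - mu h • x₀) k - b (b x₀ k - mu k • x₀) h
        + mu h • (b x₀ k - mu k • x₀) - mu k • (b x₀ h - mu h • x₀) := by
      simp only [map_sub, map_smul, LinearMap.sub_apply, LinearMap.smul_apply]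
      rw [hb x₀ h k]
      module
    rw [key]
    exact Submodule.sub_mem _ (Submodule.add_mem _
      (Submodule.sub_mem _ (quasi_subalg hH hq hk) (quasi_subalg hH hp hh))
      (Submodule.smul_mem _ _ hp)) (Submodule.smul_mem _ _ hq)
  -- E3 : lam vanishes on [H,H]
  have E3 : ∀ h ∈ H, ∀ k ∈ H, lam (b h k) = 0 := by
    intro h hh k hk
    refine (UR (b h k) (quasi_subalg hH hh hk) x₀ hx₀ 0 ?_).symm
    simpa using Tmem h hh k hk
  -- E2 : mu vanishes on [H,H]
  have E2 : ∀ h ∈ H, ∀ k ∈ H, mu (b h k) = 0 := by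
    intro h hh k hk
    refine (UL (b h k) (quasi_subalg hH hh hk) x₀ hx₀ 0 ?_).symm
    simpa using Smem h hh k hk
  -- E4 : lam h * (lam k + mu k) = 0
  have E4 : ∀ h ∈ H, ∀ k ∈ H, lam h * (lam k + mu k) = 0 := by
    intro h hh k hk
    have hp : b x₀ k - mu k • x₀ ∈ H := ML k hk x₀
    have hq : b h x₀ - lam h • x₀ ∈ H := MR h hh x₀
    have hr : b k x₀ - lam k • x₀ ∈ H := MR k hk x₀
    have key : (lam k * lam h + lam h * mu k) • x₀
        = b (b h k) x₀ - b (b h x₀ - lam h • x₀) k - lam h • (b x₀ k - mu k • x₀)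
          - b h (b k x₀ - lam k • x₀) - lam k • (b h x₀ - lam h • x₀) := by
      simp only [map_sub, map_smul, LinearMap.sub_apply, LinearMap.smul_apply]
      rw [hb h k x₀]
      module
    have hmem : (lam k * lam h + lam h * mu k) • x₀ ∈ H := by
      rw [key]
      exact Submodule.sub_mem _ (Submodule.sub_mem _ (Submodule.sub_mem _
        (Submodule.sub_mem _ (Tmem h hh k hk) (quasi_subalg hH hq hk))
        (Submodule.smul_mem _ _ hp)) (quasi_subalg hH hh hr)) (Submodule.smul_mem _ _ hq)
    have h0 := scalar_zero hx₀ hmem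
    linear_combination h0
  have mu_zero : mu 0 = 0 := by
    have := mu_smul 0 0 H.zero_mem
    simpa using this
  have lam_zero : lam 0 = 0 := by
    have := lam_smul 0 0 H.zero_mem
    simpa using this
  -- mu and lam vanish on squares lying in H
  have muI : ∀ z ∈ H, z ∈ sqSpan b → mu z = 0 := by
    intro z hz hsq
    have h1 : b x₀ z - mu z • x₀ ∈ H := ML z hz x₀
    rw [left_sq_zero hb hsq x₀, zero_sub] at h1
    have h2 : mu z • x₀ ∈ H := by simpa using Submodule.neg_mem _ h1
    exact scalar_zero hx₀ h2
  by_cases hlamzero : ∀ h ∈ H, lam h = 0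
  · by_cases hmuzero : ∀ h ∈ H, mu h = 0
    · -- H is an ideal, hence H = ⊥ : case (i)
      left
      apply ideal_eq_bot_of_corefree hcore _ le_rfl
      apply sup_le
      · apply bspan_le
        intro a ha c _
        have := MR a ha c
        rw [hlamzero a ha, zero_smul, sub_zero] at this
        exact this
      · apply bspan_le
        intro a _ c hc
        have := ML c hc a
        rw [hmuzero c hc, zero_smul, sub_zero] at this
        exact this
    · -- the mu-branch : case (iv)
      push_neg at hmuzero
      obtain ⟨h₁, hh₁, hmu1⟩ := hmuzero
      -- mu vanishes on [H, L]
      have muHL : ∀ h ∈ H, ∀ y, b h y ∈ H ∧ mu (b h y) = 0 := by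
        intro h hh y
        have hmem : b h y ∈ H := by
          have := MR h hh y
          rwa [hlamzero h hh, zero_smul, sub_zero] at this
        refine ⟨hmem, ?_⟩
        have hq : b x₀ h - mu h • x₀ ∈ H := ML h hh x₀
        have hq' : (b x₀ h - mu h • x₀) ∈ H := hq
        have hqy : b (b x₀ h - mu h • x₀) y ∈ H := by
          have := MR _ hq' y
          rwa [hlamzero _ hq', zero_smul, sub_zero] at this
        have hyh : b (b x₀ y) h - mu h • (b x₀ y) ∈ H := ML h hh (b x₀ y)
        have key : b x₀ (b h y) = b (b x₀ h - mu h • x₀) y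
            - (b (b x₀ y) h - mu h • (b x₀ y)) := by
          simp only [map_sub, map_smul, LinearMap.sub_apply, LinearMap.smul_apply]
          rw [hb x₀ h y]
          module
        have hmem2 : b x₀ (b h y) ∈ H := by
          rw [key]; exact Submodule.sub_mem _ hqy hyh
        refine (UL (b h y) hmem x₀ hx₀ 0 ?_).symm
        simpa using hmem2
      -- mu vanishes on [L, a] for a in the kernel of mu
      have muLN : ∀ a ∈ H, mu a = 0 → ∀ x, b x a ∈ H ∧ mu (b x a) = 0 := by
        intro a ha hmua x
        have hmem : b x a ∈ H := by
          have := ML a ha x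
          rwa [hmua, zero_smul, sub_zero] at this
        refine ⟨hmem, ?_⟩
        have hs : b x a + b a x ∈ sqSpan b := polar_mem x a
        have hsH : b x a + b a x ∈ H := Submodule.add_mem _ hmem (muHL a ha x).1
        have hmus : mu (b x a + b a x) = 0 := muI _ hsH hs
        have e : b x a = (b x a + b a x) - b a x := by abel
        rw [e, mu_sub _ hsH _ (muHL a ha x).1, hmus, (muHL a ha x).2, sub_zero]
      -- the kernel of mu on H is an ideal contained in H, hence zero
      have Ninj : ∀ a ∈ H, mu a = 0 → a = 0 := by
        intro a ha hmua
        let N : Submodule F L :=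
          { carrier := {a | a ∈ H ∧ mu a = 0}
            zero_mem' := ⟨H.zero_mem, mu_zero⟩
            add_mem' := by
              rintro u v ⟨hu, hmu⟩ ⟨hv, hmv⟩
              exact ⟨Submodule.add_mem _ hu hv, by rw [mu_add u hu v hv, hmu, hmv, add_zero]⟩
            smul_mem' := by
              rintro c u ⟨hu, hmu⟩
              exact ⟨Submodule.smul_mem _ c hu, by rw [mu_smul c u hu, hmu, mul_zero]⟩ }
        have memN : ∀ z : L, z ∈ N ↔ (z ∈ H ∧ mu z = 0) := fun z => Iff.rfl
        have hNbot : N = ⊥ := by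
          apply ideal_eq_bot_of_corefree hcore _ (fun z hz => ((memN z).1 hz).1)
          apply sup_le
          · apply bspan_le
            intro u hu c _
            obtain ⟨hu1, hu2⟩ := (memN u).1 hu
            exact (memN _).2 ⟨(muHL u hu1 c).1, (muHL u hu1 c).2⟩
          · apply bspan_le
            intro u _ c hc
            obtain ⟨hc1, hc2⟩ := (memN c).1 hc
            exact (memN _).2 ⟨(muLN c hc1 hc2 u).1, (muLN c hc1 hc2 u).2⟩
        have : a ∈ N := (memN a).2 ⟨ha, hmua⟩
        rw [hNbot] at this
        simpa using this
      -- normalize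
      obtain ⟨h₀, hh₀, hmuh₀⟩ : ∃ h₀ ∈ H, mu h₀ = 1 :=
        ⟨(mu h₁)⁻¹ • h₁, Submodule.smul_mem _ _ hh₁, by
          rw [mu_smul _ h₁ hh₁, inv_mul_cancel₀ hmu1]⟩
      have hh₀ne : h₀ ≠ 0 := by
        intro h'
        rw [h', mu_zero] at hmuh₀
        exact one_ne_zero hmuh₀.symm
      have rep : ∀ k ∈ H, k = mu k • h₀ := by
        intro k hk
        have h1 : k - mu k • h₀ ∈ H :=
          Submodule.sub_mem _ hk (Submodule.smul_mem _ _ hh₀)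
        have h2 : mu (k - mu k • h₀) = 0 := by
          rw [mu_sub k hk _ (Submodule.smul_mem _ _ hh₀), mu_smul _ h₀ hh₀, hmuh₀,
            mul_one, sub_self]
        have := Ninj _ h1 h2
        rw [sub_eq_zero] at this
        exact this
      -- exact structure constants
      obtain ⟨af, haf_def⟩ : ∃ af : L → F, ∀ x, af x = mu (b h₀ x) :=
        ⟨fun x => mu (b h₀ x), fun _ => rfl⟩
      obtain ⟨bf, hbf_def⟩ : ∃ bf : L → F, ∀ x, bf x = mu (b x h₀ - x) :=
        ⟨fun x => mu (b x h₀ - x), fun _ => rfl⟩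
      have hbz : ∀ x, b h₀ x = af x • h₀ := by
        intro x
        rw [haf_def]
        exact rep _ (muHL h₀ hh₀ x).1
      have hbxh : ∀ x, b x h₀ = x + bf x • h₀ := by
        intro x
        have hmem : b x h₀ - x ∈ H := by
          have := ML h₀ hh₀ x
          rwa [hmuh₀, one_smul] at this
        have h1 := rep _ hmem
        rw [hbf_def]
        linear_combination (norm := module) h1
      have hb00 : b h₀ h₀ = 0 := by
        have h1 : mu (b h₀ h₀) = 0 := (muHL h₀ hh₀ h₀).2
        have h2 := rep _ (muHL h₀ hh₀ h₀).1
        rw [h1, zero_smul] at h2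
        exact h2
      -- af vanishes identically
      have haf : ∀ y, af y = 0 := by
        intro y
        have lid := hb x₀ h₀ y
        rw [hbz y, map_smul, hbxh x₀, hbxh (b x₀ y)] at lid
        have lid2 : b (x₀ + bf x₀ • h₀) y = b x₀ y + bf x₀ • (af y • h₀) := by
          rw [map_add, map_smul, LinearMap.add_apply, LinearMap.smul_apply, hbz y]
        rw [lid2] at lid
        have key : af y • x₀ = (- bf (b x₀ y) - af y * bf x₀ + bf x₀ * af y) • h₀ := by
          linear_combination (norm := module) lid
        apply scalar_zero hx₀
        rw [key]
        exact Submodule.smul_mem _ _ hh₀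
      have hbz' : ∀ x, b h₀ x = 0 := by
        intro x; rw [hbz x, haf x, zero_smul]
      -- bf vanishes on products
      have hbfL2 : ∀ x y, bf (b x y) = 0 := by
        intro x y
        have lid := hb x h₀ y
        rw [hbz' y, map_zero, hbxh x, hbxh (b x y)] at lid
        have lid2 : b (x + bf x • h₀) y = b x y := by
          rw [map_add, map_smul, LinearMap.add_apply, LinearMap.smul_apply, hbz' y,
            smul_zero, add_zero]
        rw [lid2] at lid
        have key : bf (b x y) • h₀ = 0 := by
          linear_combination (norm := module) lid
        rcases smul_eq_zero.1 key with h3 | h3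
        · exact h3
        · exact absurd h3 hh₀ne
      -- the multiplication formula
      have star : ∀ x y, b x y = -(bf y) • x - (bf x * bf y) • h₀ := by
        intro x y
        have lid := hb x y h₀
        rw [hbxh y, hbxh (b x y)] at lid
        have lid2 : b x (y + bf y • h₀) = b x y + bf y • (x + bf x • h₀) := by
          rw [map_add, map_smul, hbxh x]
        have lid3 : b (b x h₀) y = b x y := by
          rw [hbxh x, map_add, map_smul, LinearMap.add_apply, LinearMap.smul_apply,
            hbz' y, smul_zero, add_zero]
        rw [lid2, lid3, hbfL2 x y] at lid
        linear_combination (norm := module) lid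
      -- sqSpan is the fixed space of right multiplication by h₀
      have hJ : ∀ z, z ∈ sqSpan b ↔ b z h₀ = z := by
        intro z
        constructor
        · intro hz
          induction hz using Submodule.span_induction with
          | mem u hu =>
              obtain ⟨x, rfl⟩ := hu
              rw [hbxh (b x x), hbfL2 x x, zero_smul, add_zero]
          | zero => rw [map_zero, LinearMap.zero_apply]
          | add u v hu hv hu' hv' =>
              rw [map_add, LinearMap.add_apply, hu', hv']
          | smul c u hu hu' =>
              rw [map_smul, LinearMap.smul_apply, hu']
        · intro hz
          have hbfz : bf z = 0 := by
            have h1 := hbxh z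
            rw [hz] at h1
            have h2 : bf z • h₀ = 0 := left_eq_add.1 h1
            rcases smul_eq_zero.1 h2 with h3 | h3
            · exact h3
            · exact absurd h3 hh₀ne
          have hzz : b z z = 0 := by
            rw [star z z, hbfz]; simp
          have hsq : b (z + h₀) (z + h₀) = z := by
            simp only [map_add, LinearMap.add_apply]
            rw [hzz, hz, hbz' z, hb00]
            abel
          rw [← hsq]
          exact sq_mem (z + h₀)
      -- conclusion : case (iv)
      right; right; right
      refine ⟨h₀, ?_, ?_, ?_, hb00⟩
      · -- sqSpan ⊓ span {h₀} = ⊥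
        rw [Submodule.eq_bot_iff]
        intro z hz
        rw [Submodule.mem_inf] at hz
        obtain ⟨hz1, hz2⟩ := hz
        obtain ⟨c, rfl⟩ := Submodule.mem_span_singleton.1 hz2
        have h1 := (hJ _).1 hz1
        rw [map_smul, LinearMap.smul_apply, hb00, smul_zero] at h1
        exact h1.symm
      · -- sqSpan ⊔ span {h₀} = ⊤
        rw [eq_top_iff]
        intro x _
        have hxmem : x + bf x • h₀ ∈ sqSpan b := by
          rw [hJ]
          rw [map_add, LinearMap.add_apply, map_smul, LinearMap.smul_apply, hb00,
            smul_zero, add_zero, hbxh x]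
        have hx' : x = (x + bf x • h₀) + (-(bf x)) • h₀ := by module
        rw [hx']
        exact Submodule.add_mem _ (Submodule.mem_sup_left hxmem)
          (Submodule.mem_sup_right (Submodule.smul_mem _ _ (Submodule.mem_span_singleton_self h₀)))
      · -- bracket relations
        intro z hz
        exact ⟨(hJ z).1 hz, hbz' z⟩
  · -- the lam-branch : case (iii)
    push_neg at hlamzero
    obtain ⟨h₁, hh₁, hlam1⟩ := hlamzero
    have mu_eq_neg_lam : ∀ k ∈ H, mu k = -lam k := by
      intro k hk
      have h1 := E4 h₁ hh₁ k hk
      have h2 := (mul_eq_zero.1 h1).resolve_left hlam1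
      linear_combination h2
    have lamI : ∀ z ∈ H, z ∈ sqSpan b → lam z = 0 := by
      intro z hz hsq
      have h1 := mu_eq_neg_lam z hz
      rw [muI z hz hsq] at h1
      linear_combination h1
    -- lam vanishes on [a, L] for a in its kernel
    have lamHL : ∀ a ∈ H, lam a = 0 → ∀ x, b a x ∈ H ∧ lam (b a x) = 0 := by
      intro a ha hlama x
      have hmem : ∀ w, b a w ∈ H := by
        intro w
        have := MR a ha w
        rwa [hlama, zero_smul, sub_zero] at this
      refine ⟨hmem x, ?_⟩
      by_cases hx : x ∈ H
      · exact E3 a ha x hx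
      · obtain ⟨y, hy⟩ := P x hx
        have lid := hb a x y
        have hA : b (b a x) y - lam (b a x) • y ∈ H := MR _ (hmem x) y
        have hB : b (b a y) x - lam (b a y) • x ∈ H := MR _ (hmem y) x
        have hC : b a (b x y) ∈ H := hmem (b x y)
        have comb : (- lam (b a y)) • x + (lam (b a x)) • y ∈ H := by
          have e : (- lam (b a y)) • x + (lam (b a x)) • y
              = (b (b a y) x - lam (b a y) • x) - (b (b a x) y - lam (b a x) • y)
                + b a (b x y) := by
            linear_combination (norm := module) -lid
          rw [e]
          exact Submodule.add_mem _ (Submodule.sub_mem _ hB hA) hC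
        exact (indep2 hx hy comb).2
    have lamLN : ∀ a ∈ H, lam a = 0 → ∀ x, b x a ∈ H ∧ lam (b x a) = 0 := by
      intro a ha hlama x
      have hmua : mu a = 0 := by rw [mu_eq_neg_lam a ha, hlama, neg_zero]
      have hmem : b x a ∈ H := by
        have := ML a ha x
        rwa [hmua, zero_smul, sub_zero] at this
      refine ⟨hmem, ?_⟩
      have hs : b x a + b a x ∈ sqSpan b := polar_mem x a
      have hsH : b x a + b a x ∈ H := Submodule.add_mem _ hmem (lamHL a ha hlama x).1
      have hlams : lam (b x a + b a x) = 0 := lamI _ hsH hs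
      have e : b x a = (b x a + b a x) - b a x := by abel
      rw [e, lam_sub _ hsH _ (lamHL a ha hlama x).1, hlams, (lamHL a ha hlama x).2, sub_zero]
    -- the kernel of lam on H is an ideal, hence zero
    have Ninj : ∀ a ∈ H, lam a = 0 → a = 0 := by
      intro a ha hlama
      let N : Submodule F L :=
        { carrier := {a | a ∈ H ∧ lam a = 0}
          zero_mem' := ⟨H.zero_mem, lam_zero⟩
          add_mem' := by
            rintro u v ⟨hu, hlu⟩ ⟨hv, hlv⟩
            exact ⟨Submodule.add_mem _ hu hv, by rw [lam_add u hu v hv, hlu, hlv, add_zero]⟩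
          smul_mem' := by
            rintro c u ⟨hu, hlu⟩
            exact ⟨Submodule.smul_mem _ c hu, by rw [lam_smul c u hu, hlu, mul_zero]⟩ }
      have memN : ∀ z : L, z ∈ N ↔ (z ∈ H ∧ lam z = 0) := fun z => Iff.rfl
      have hNbot : N = ⊥ := by
        apply ideal_eq_bot_of_corefree hcore _ (fun z hz => ((memN z).1 hz).1)
        apply sup_le
        · apply bspan_le
          intro u hu c _
          obtain ⟨hu1, hu2⟩ := (memN u).1 hu
          exact (memN _).2 ⟨(lamHL u hu1 hu2 c).1, (lamHL u hu1 hu2 c).2⟩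
        · apply bspan_le
          intro u _ c hc
          obtain ⟨hc1, hc2⟩ := (memN c).1 hc
          exact (memN _).2 ⟨(lamLN c hc1 hc2 u).1, (lamLN c hc1 hc2 u).2⟩
      have : a ∈ N := (memN a).2 ⟨ha, hlama⟩
      rw [hNbot] at this
      simpa using this
    -- normalize
    obtain ⟨h₀, hh₀, hlamh₀⟩ : ∃ h₀ ∈ H, lam h₀ = 1 :=
      ⟨(lam h₁)⁻¹ • h₁, Submodule.smul_mem _ _ hh₁, by
        rw [lam_smul _ h₁ hh₁, inv_mul_cancel₀ hlam1]⟩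
    have hh₀ne : h₀ ≠ 0 := by
      intro h'
      rw [h', lam_zero] at hlamh₀
      exact one_ne_zero hlamh₀.symm
    have hmuh₀ : mu h₀ = -1 := by rw [mu_eq_neg_lam h₀ hh₀, hlamh₀]
    have rep : ∀ k ∈ H, k = lam k • h₀ := by
      intro k hk
      have h1 : k - lam k • h₀ ∈ H :=
        Submodule.sub_mem _ hk (Submodule.smul_mem _ _ hh₀)
      have h2 : lam (k - lam k • h₀) = 0 := by
        rw [lam_sub k hk _ (Submodule.smul_mem _ _ hh₀), lam_smul _ h₀ hh₀, hlamh₀,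
          mul_one, sub_self]
      have := Ninj _ h1 h2
      rw [sub_eq_zero] at this
      exact this
    -- exact structure constants
    obtain ⟨af, haf_def⟩ : ∃ af : L → F, ∀ x, af x = lam (b h₀ x - x) :=
      ⟨fun x => lam (b h₀ x - x), fun _ => rfl⟩
    have hMRh₀ : ∀ x, b h₀ x - x ∈ H := by
      intro x
      have := MR h₀ hh₀ x
      rwa [hlamh₀, one_smul] at this
    have hMLh₀ : ∀ x, b x h₀ + x ∈ H := by
      intro x
      have := ML h₀ hh₀ x
      rw [hmuh₀] at this
      have e : b x h₀ - (-1 : F) • x = b x h₀ + x := by module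
      rwa [e] at this
    have hbz : ∀ x, b h₀ x = x + af x • h₀ := by
      intro x
      have h1 := rep _ (hMRh₀ x)
      rw [haf_def]
      linear_combination (norm := module) h1
    have hb00 : b h₀ h₀ = 0 := by
      have hm : b h₀ h₀ ∈ H := quasi_subalg hH hh₀ hh₀
      have h1 := rep _ hm
      rw [E3 h₀ hh₀ h₀ hh₀, zero_smul] at h1
      exact h1
    have hafh₀ : af h₀ = -1 := by
      have h1 := hbz h₀
      rw [hb00] at h1
      have h2 : (1 + af h₀) • h₀ = 0 := by linear_combination (norm := module) -h1
      rcases smul_eq_zero.1 h2 with h3 | h3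
      · linear_combination h3
      · exact absurd h3 hh₀ne
    -- b x h₀ = -x - af x • h₀
    have hbxh : ∀ x, b x h₀ = -x - af x • h₀ := by
      intro x
      obtain ⟨bfx, hbfx⟩ : ∃ c : F, b x h₀ = -x + c • h₀ := by
        have h1 := rep _ (hMLh₀ x)
        exact ⟨lam (b x h₀ + x), by linear_combination (norm := module) h1⟩
      have lid := hb h₀ h₀ x
      rw [hb00, map_zero, LinearMap.zero_apply, zero_sub] at lid
      rw [hbz x] at lid
      have e1 : b h₀ (x + af x • h₀) = x + af x • h₀ := by
        rw [map_add, map_smul, hbz x, hb00, smul_zero, add_zero]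
      have e2 : b (x + af x • h₀) h₀ = -x + bfx • h₀ + af x • 0 := by
        rw [map_add, map_smul, LinearMap.add_apply, LinearMap.smul_apply, hbfx, hb00]
      rw [e1, e2] at lid
      have key : (af x + bfx) • h₀ = 0 := by linear_combination (norm := module) lid
      rcases smul_eq_zero.1 key with h3 | h3
      · rw [hbfx]
        have : bfx = -af x := by linear_combination h3
        rw [this]
        module
      · exact absurd h3 hh₀ne
    -- the multiplication formula
    have starstar : ∀ x y, b y x = af x • y - af y • x - af (b x y) • h₀ := by
      intro x y
      have lid := hb h₀ x y
      rw [hbz (b x y), hbz x, hbz y] at lid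
      have e1 : b (x + af x • h₀) y = b x y + af x • (y + af y • h₀) := by
        rw [map_add, map_smul, LinearMap.add_apply, LinearMap.smul_apply, hbz y]
      have e2 : b (y + af y • h₀) x = b y x + af y • (x + af x • h₀) := by
        rw [map_add, map_smul, LinearMap.add_apply, LinearMap.smul_apply, hbz x]
      rw [e1, e2] at lid
      linear_combination (norm := module) lid
    -- L is a Lie algebra
    have sqH : sqSpan b ≤ H := by
      rw [sqSpan, Submodule.span_le]
      rintro z ⟨x, rfl⟩
      have h1 := starstar x x
      have e : b x x = -af (b x x) • h₀ := by linear_combination (norm := module) h1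
      rw [e]
      exact Submodule.smul_mem _ _ hh₀
    have hsqbot : sqSpan b = ⊥ := ideal_eq_bot_of_corefree hcore (sqSpan_ideal hb) sqH
    have Lie : ∀ x, b x x = 0 := by
      intro x
      have := sq_mem (b := b) x
      rw [hsqbot] at this
      simpa using this
    have anti : ∀ x y, b y x = - b x y := by
      intro x y
      have := polar_mem (b := b) x y
      rw [hsqbot] at this
      have h0 : b x y + b y x = 0 := by simpa using this
      linear_combination (norm := module) h0
    -- linearity of af
    have af_add : ∀ u v, af (u + v) = af u + af v := by
      intro u v
      rw [haf_def, haf_def, haf_def]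
      have e : b h₀ (u + v) - (u + v) = (b h₀ u - u) + (b h₀ v - v) := by
        rw [map_add]; abel
      rw [e, lam_add _ (hMRh₀ u) _ (hMRh₀ v)]
    have af_smul : ∀ (c : F) (u : L), af (c • u) = c * af u := by
      intro c u
      rw [haf_def, haf_def]
      have e : b h₀ (c • u) - c • u = c • (b h₀ u - u) := by
        rw [map_smul]; module
      rw [e, lam_smul _ _ (hMRh₀ u)]
    have af_sub : ∀ u v, af (u - v) = af u - af v := by
      intro u v
      have e : u - v = u + (-1 : F) • v := by module
      rw [e, af_add, af_smul]; ring
    have af_zero : af 0 = 0 := by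
      rw [haf_def, map_zero, sub_zero]
      exact lam_zero
    -- symmetry of gamma
    have afsym : ∀ x y, af (b x y) = af (b y x) := by
      intro x y
      have h1 := starstar x y
      have h2 : af (b y x) = af (af x • y - af y • x - af (b x y) • h₀) := by rw [← h1]
      rw [af_sub, af_sub, af_smul, af_smul, af_smul, hafh₀] at h2
      linear_combination -h2
    have hgam2 : ∀ x y, af (b x y) + af (b x y) = 0 := by
      intro x y
      have h1 : af (b y x) = -af (b x y) := by
        rw [anti x y]
        have e : -b x y = (-1 : F) • b x y := by module
        rw [e, af_smul]; ring
      have h2 := afsym x y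
      rw [h1] at h2
      linear_combination h2
    have af_neg : ∀ w : L, af (-w) = -af w := by
      intro w
      have e : -w = (-1 : F) • w := by module
      rw [e, af_smul]; ring
    by_cases hgam : ∀ x y, af (b x y) = 0
    · -- almost abelian
      right; right; left
      have hL2af : ∀ z ∈ bspan b ⊤ ⊤, af z = 0 := by
        intro z hz
        rw [bspan] at hz
        induction hz using Submodule.span_induction with
        | mem w hw =>
            obtain ⟨p, -, q, -, rfl⟩ := hw
            exact hgam p q
        | zero => exact af_zero
        | add p q _ _ hp hq => rw [af_add, hp, hq, add_zero]
        | smul c p _ hp => rw [af_smul, hp, mul_zero]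
      have hJL2 : ∀ z, af z = 0 → z ∈ bspan b ⊤ ⊤ := by
        intro z hz
        have e : b z (-h₀) = z := by
          rw [map_neg, hbxh z, hz, zero_smul, sub_zero, neg_neg]
        rw [← e]
        exact mem_bspan b Submodule.mem_top Submodule.mem_top
      refine ⟨Lie, Or.inl ⟨-h₀, ?_, ?_, ?_, ?_⟩⟩
      · rw [Submodule.eq_bot_iff]
        intro z hz
        rw [Submodule.mem_inf] at hz
        obtain ⟨hz1, hz2⟩ := hz
        obtain ⟨c, rfl⟩ := Submodule.mem_span_singleton.1 hz2
        have h1 : af (c • -h₀) = 0 := hL2af _ hz1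
        rw [af_smul, af_neg, hafh₀] at h1
        have : c = 0 := by
          rcases mul_eq_zero.1 h1 with h | h
          · exact h
          · exact absurd h (by norm_num)
        rw [this, zero_smul]
      · rw [eq_top_iff]
        intro x _
        have h1 : af (x + af x • h₀) = 0 := by
          rw [af_add, af_smul, hafh₀]; ring
        have hx' : x = (x + af x • h₀) + af x • (-h₀) := by module
        rw [hx']
        exact Submodule.add_mem _ (Submodule.mem_sup_left (hJL2 _ h1))
          (Submodule.mem_sup_right (Submodule.smul_mem _ _ (Submodule.mem_span_singleton_self (-h₀))))
      · rw [Submodule.eq_bot_iff]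
        intro z hz
        have : bspan b (bspan b ⊤ ⊤) (bspan b ⊤ ⊤) ≤ ⊥ := by
          apply bspan_le
          intro p hp q hq
          have h1 := starstar q p
          rw [hL2af p hp, hL2af q hq, hgam q p, zero_smul, zero_smul, zero_smul] at h1
          simp only [Submodule.mem_bot]
          rw [h1]; abel
        simpa using this hz
      · intro x hx
        rw [map_neg, hbxh x, hL2af x hx, zero_smul, sub_zero, neg_neg]
    · -- the K₂ case in characteristic two
      push_neg at hgam
      obtain ⟨u, v, hne⟩ := hgam
      have char2 : (2 : F) = 0 := by
        have h2 := hgam2 u v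
        have h3 : (2 : F) * af (b u v) = 0 := by linear_combination h2
        rcases mul_eq_zero.1 h3 with h | h
        · exact h
        · exact absurd h hne
      have hchar : ringChar F = 2 := by
        have hdvd : ringChar F ∣ 2 := ringChar.dvd (by exact_mod_cast char2)
        rcases (Nat.dvd_prime Nat.prime_two).1 hdvd with h1 | h1
        · exfalso
          have hCP : CharP F (ringChar F) := ringChar.charP F
          have := CharP.cast_eq_zero F (ringChar F)
          rw [h1] at this
          simp at this
        · exact h1
      have neg_eq : ∀ w : L, -w = w := by
        intro w
        have h1 : (2 : F) • w = 0 := by rw [char2, zero_smul]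
        rw [two_smul] at h1
        exact neg_eq_of_add_eq_zero_left h1
      -- normalized pair with gamma = 1
      have hafu' : af (u + af u • h₀) = 0 := by rw [af_add, af_smul, hafh₀]; ring
      have hafv' : af (v + af v • h₀) = 0 := by rw [af_add, af_smul, hafh₀]; ring
      have hafuh : ∀ w, af (b w h₀) = 0 := by
        intro w
        rw [hbxh w, af_sub, af_neg, af_smul, hafh₀]; ring
      have hafhv : ∀ w, af (b h₀ w) = 0 := by
        intro w
        rw [hbz w, af_add, af_smul, hafh₀]; ring
      have hguv : af (b (u + af u • h₀) (v + af v • h₀)) = af (b u v) := by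
        have e : b (u + af u • h₀) (v + af v • h₀)
            = b u v + af v • b u h₀ + af u • b h₀ v + af u • (af v • b h₀ h₀) := by
          simp only [map_add, map_smul, LinearMap.add_apply, LinearMap.smul_apply]
          module
        rw [e, af_add, af_add, af_add, af_smul, af_smul, af_smul, af_smul, hafuh, hafhv,
          hb00, af_zero]
        ring
      have hcne : af (b (u + af u • h₀) (v + af v • h₀)) ≠ 0 := by rw [hguv]; exact hne
      -- the basis
      obtain ⟨y₁, hafy₁, z₁, hafz₁, hγ1⟩ :
          ∃ y₁, af y₁ = 0 ∧ ∃ z₁, af z₁ = 0 ∧ af (b y₁ z₁) = 1 := by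
        refine ⟨u + af u • h₀, hafu', (af (b (u + af u • h₀) (v + af v • h₀)))⁻¹ •
          (v + af v • h₀), ?_, ?_⟩
        · rw [af_smul, hafv', mul_zero]
        · rw [map_smul, af_smul, inv_mul_cancel₀ hcne]
      have hbh₀z₁ : b h₀ z₁ = z₁ := by rw [hbz z₁, hafz₁, zero_smul, add_zero]
      have f3 : b h₀ y₁ = y₁ := by rw [hbz y₁, hafy₁, zero_smul, add_zero]
      have f2 : b z₁ h₀ = z₁ := by
        rw [hbxh z₁, hafz₁, zero_smul, sub_zero]; exact neg_eq z₁
      have f4 : b y₁ h₀ = y₁ := by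
        rw [hbxh y₁, hafy₁, zero_smul, sub_zero]; exact neg_eq y₁
      have f1 : b y₁ z₁ = h₀ := by
        have h1 := starstar z₁ y₁
        rw [hafz₁, hafy₁, afsym z₁ y₁, hγ1, zero_smul, zero_smul, one_smul] at h1
        rw [h1]
        have : (0 : L) - (0 : L) - h₀ = -h₀ := by abel
        rw [this]
        exact neg_eq h₀
      have hz₁ne : z₁ ≠ 0 := by
        intro h'
        rw [h', map_zero, af_zero] at hγ1
        exact one_ne_zero hγ1.symm
      -- every element with af = 0 lies in the span of y₁ and z₁
      have Jspan : ∀ w, af w = 0 → w = af (b w y₁) • z₁ - af (b w z₁) • y₁ := by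
        intro w hafw
        have lid := hb w y₁ z₁
        rw [f1, hbxh w, hafw, zero_smul, sub_zero] at lid
        have e1 : b w y₁ = -(af (b w y₁)) • h₀ := by
          have h1 := starstar y₁ w
          rw [hafy₁, hafw, afsym y₁ w, zero_smul, zero_smul] at h1
          linear_combination (norm := module) h1
        have e2 : b (b w y₁) z₁ = -(af (b w y₁)) • z₁ := by
          conv_lhs => rw [e1]
          rw [map_smul, LinearMap.smul_apply, hbh₀z₁]
        have e3 : b w z₁ = -(af (b w z₁)) • h₀ := by
          have h1 := starstar z₁ w
          rw [hafz₁, hafw, afsym z₁ w, zero_smul, zero_smul] at h1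
          linear_combination (norm := module) h1
        have e4 : b (b w z₁) y₁ = -(af (b w z₁)) • y₁ := by
          conv_lhs => rw [e3]
          rw [map_smul, LinearMap.smul_apply, f3]
        rw [e2, e4] at lid
        linear_combination (norm := module) -lid
      right; right; left
      refine ⟨Lie, Or.inr ⟨hchar, y₁, z₁, h₀, ?_, ?_, f1, f2, f3⟩⟩
      · -- linear independence
        rw [Fintype.linearIndependent_iff]
        intro g hg
        rw [Fin.sum_univ_three] at hg
        simp only [Matrix.cons_val_zero, Matrix.cons_val_one, Matrix.head_cons,
          Matrix.cons_val_two, Matrix.tail_cons] at hg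
        have h1 : b (g 0 • y₁ + g 1 • z₁ + g 2 • h₀) h₀ = 0 := by
          rw [hg, map_zero, LinearMap.zero_apply]
        simp only [map_add, map_smul, LinearMap.add_apply, LinearMap.smul_apply] at h1
        rw [f4, f2, hb00, smul_zero, add_zero] at h1
        have hg2 : g 2 • h₀ = 0 := by linear_combination (norm := module) hg - h1
        have hg2' : g 2 = 0 := by
          rcases smul_eq_zero.1 hg2 with h | h
          · exact h
          · exact absurd h hh₀ne
        have h2 : b (g 0 • y₁ + g 1 • z₁) z₁ = 0 := by
          rw [show g 0 • y₁ + g 1 • z₁ = 0 from h1, map_zero, LinearMap.zero_apply]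
        simp only [map_add, map_smul, LinearMap.add_apply, LinearMap.smul_apply] at h2
        rw [f1, Lie z₁, smul_zero, add_zero] at h2
        have hg0 : g 0 = 0 := by
          rcases smul_eq_zero.1 h2 with h | h
          · exact h
          · exact absurd h hh₀ne
        have hg1 : g 1 = 0 := by
          rw [hg0, zero_smul, zero_add] at h1
          rcases smul_eq_zero.1 h1 with h | h
          · exact h
          · exact absurd h hz₁ne
        intro i
        fin_cases i
        · exact hg0
        · exact hg1
        · exact hg2'
      · -- spanning
        rw [eq_top_iff]
        intro x _
        have hy₁mem : y₁ ∈ Submodule.span F {y₁, z₁, h₀} :=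
          Submodule.subset_span (by simp)
        have hz₁mem : z₁ ∈ Submodule.span F {y₁, z₁, h₀} :=
          Submodule.subset_span (by simp)
        have hh₀mem : h₀ ∈ Submodule.span F {y₁, z₁, h₀} :=
          Submodule.subset_span (by simp)
        have h1 : af (x + af x • h₀) = 0 := by rw [af_add, af_smul, hafh₀]; ring
        have hw := Jspan (x + af x • h₀) h1
        have hx' : x = af (b (x + af x • h₀) y₁) • z₁ - af (b (x + af x • h₀) z₁) • y₁
            - af x • h₀ := by
          rw [← hw]; module
        rw [hx']
        exact Submodule.sub_mem _ (Submodule.sub_mem _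
          (Submodule.smul_mem _ _ hz₁mem) (Submodule.smul_mem _ _ hy₁mem))
          (Submodule.smul_mem _ _ hh₀mem)
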